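/- Paycha's noncommutative Taylor formula for monomials: let ρ and ε be square complex matrices of the same size, let ad_ρ(X) = ρX − Xρ, and let N ∈ ℕ. Then (ρ + ε)^N = Σ_{n=0}^{N} Σ over tuples (k₁,…,k_n) ∈ ℕ^n with k₁+⋯+k_n+n ≤ N of the term [1 / ((k₁+1)(k₁+k₂+2)⋯(k₁+⋯+k_n+n))] · (ad_ρ^{k₁}(ε)/k₁!) ⋯ (ad_ρ^{k_n}(ε)/k_n!) · (N!/(N−k₁−⋯−k_n−n)!) · ρ^{N−k₁−⋯−k_n−n}, where the n = 0 term is ρ^N and the derivative factor (N!/(N−k₁−⋯−k_n−n)!) ρ^{N−k₁−⋯−k_n−n} multiplies the ordered product of iterated commutators on the right. -/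

import Mathlib

open Matrix Kronecker BigOperators
open scoped ComplexOrder

/-- The commutator map  ad_ρ(X) = ρX − Xρ. -/
noncomputable def adM {d : ℕ} (ρ X : Matrix (Fin d) (Fin d) ℂ) : Matrix (Fin d) (Fin d) ℂ :=
  ρ * X - X * ρ

lemma descFactorial_add' (N a b : ℕ) :
    N.descFactorial (a + b) = N.descFactorial a * (N - a).descFactorial b := by
  induction b with
  | zero => simp
  | succ b ih =>
    rw [← Nat.add_assoc, Nat.descFactorial_succ, Nat.descFactorial_succ, ih,
      Nat.sub_sub]
    ring

lemma desc_key (N W : ℕ) :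
    (N + 1).descFactorial (W + 1) = N.descFactorial (W + 1) + (W + 1) * N.descFactorial W := by
  rw [Nat.succ_descFactorial_succ, Nat.descFactorial_succ]
  rcases le_or_gt W N with h | h
  · have : N - W + (W + 1) = N + 1 := by omega
    nlinarith [this]
  · rw [Nat.descFactorial_eq_zero_iff_lt.mpr h]
    simp

lemma pow_mul_eps {d : ℕ} (ρ ε : Matrix (Fin d) (Fin d) ℂ) :
    ∀ a : ℕ, ρ ^ a * ε =
      ∑ j ∈ Finset.range (a + 1), (a.choose j : ℂ) • ((adM ρ)^[j] ε * ρ ^ (a - j)) := by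
  intro a
  induction a with
  | zero => simp
  | succ a ih =>
    have step : ρ ^ (a+1) * ε = ρ * (ρ ^ a * ε) := by rw [← mul_assoc, pow_succ']
    have key : ∀ X : Matrix (Fin d) (Fin d) ℂ, ρ * X = adM ρ X + X * ρ := by
      intro X; simp [adM]
    rw [step, ih, Finset.mul_sum]
    have expand : ∀ j ∈ Finset.range (a+1),
        ρ * ((a.choose j : ℂ) • ((adM ρ)^[j] ε * ρ ^ (a - j)))
          = (a.choose j : ℂ) • ((adM ρ)^[j+1] ε * ρ ^ (a - j))
            + (a.choose j : ℂ) • ((adM ρ)^[j] ε * ρ ^ (a + 1 - j)) := by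
      intro j hj
      rw [Finset.mem_range] at hj
      have h1 : ρ * ((adM ρ)^[j] ε * ρ ^ (a-j)) = (ρ * (adM ρ)^[j] ε) * ρ ^ (a-j) := by
        rw [mul_assoc]
      have h2 : (adM ρ)^[j] ε * ρ * ρ ^ (a - j) = (adM ρ)^[j] ε * ρ ^ (a + 1 - j) := by
        rw [mul_assoc, ← pow_succ', show ρ ^ (a - j + 1) = ρ ^ (a + 1 - j) from by
          congr 1; omega]
      rw [mul_smul_comm, h1, key, add_mul, Function.iterate_succ_apply', smul_add, h2]
    rw [Finset.sum_congr rfl expand, Finset.sum_add_distrib]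
    -- Now target
    rw [Finset.sum_range_succ' (fun j => ((a+1).choose j : ℂ) • ((adM ρ)^[j] ε * ρ ^ (a + 1 - j))) (a+1)]
    have sp : ∀ j, ((a+1).choose (j+1) : ℂ) • ((adM ρ)^[j+1] ε * ρ ^ (a + 1 - (j+1)))
        = (a.choose j : ℂ) • ((adM ρ)^[j+1] ε * ρ ^ (a - j))
          + (a.choose (j+1) : ℂ) • ((adM ρ)^[j+1] ε * ρ ^ (a - j)) := by
      intro j
      have h3 : a + 1 - (j+1) = a - j := by omega
      have pascal : (((a+1).choose (j+1) : ℕ) : ℂ) = (a.choose j : ℂ) + (a.choose (j+1) : ℂ) := by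
        rw [Nat.choose_succ_succ]; push_cast; ring
      rw [h3, pascal, add_smul]
    simp only [sp]
    rw [Finset.sum_add_distrib, add_assoc]
    congr 1
    -- remains: B = ∑ C(a,j+1)•(ad^{j+1} ε ρ^{a-j}) + C(a+1,0)•(ad^0 ε * ρ^{a+1-0})
    rw [Finset.sum_range_succ' (fun j => (a.choose j : ℂ) • ((adM ρ)^[j] ε * ρ ^ (a + 1 - j))) a]
    simp only [Nat.choose_zero_right, Nat.cast_one, one_smul, Nat.sub_zero,
      Function.iterate_zero_apply]
    congr 1
    · rw [Finset.sum_range_succ]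
      simp only [Nat.choose_succ_self, Nat.cast_zero, zero_smul, add_zero]
      apply Finset.sum_congr rfl
      intro j hj
      rw [Finset.mem_range] at hj
      have h4 : a + 1 - (j + 1) = a - j := by omega
      rw [h4]

/-- partial-sum coefficient -/
def pcoeff : ℕ → List ℕ → ℕ
  | _, [] => 1
  | s, k :: t => (s + k + 1) * pcoeff (s + k + 1) t

lemma pcoeff_append (l : List ℕ) : ∀ (s j : ℕ),
    pcoeff s (l ++ [j]) = pcoeff s l * (s + l.sum + l.length + j + 1) := by
  induction l with
  | nil => intro s j; simp [pcoeff]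
  | cons a t ih =>
    intro s j
    simp only [List.cons_append, List.sum_cons, List.length_cons]
    show (s + a + 1) * pcoeff (s + a + 1) (t ++ [j]) = _
    rw [ih]
    show _ = (s + a + 1) * pcoeff (s + a + 1) t * _
    ring

lemma pcoeff_pos (l : List ℕ) : ∀ s, 0 < pcoeff s l := by
  induction l with
  | nil => intro s; simp [pcoeff]
  | cons a t ih =>
    intro s
    exact Nat.mul_pos (Nat.succ_pos _) (ih (s + a + 1))

noncomputable def prodL {d : ℕ} (ρ ε : Matrix (Fin d) (Fin d) ℂ) (l : List ℕ) :
    Matrix (Fin d) (Fin d) ℂ :=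
  (l.map fun k => ((Nat.factorial k : ℂ))⁻¹ • (adM ρ)^[k] ε).prod

lemma prodL_append {d : ℕ} (ρ ε : Matrix (Fin d) (Fin d) ℂ) (l : List ℕ) (j : ℕ) :
    prodL ρ ε (l ++ [j]) = prodL ρ ε l * (((Nat.factorial j : ℂ))⁻¹ • (adM ρ)^[j] ε) := by
  simp [prodL]

/-- The generic term of Paycha's formula. -/
noncomputable def TT {d : ℕ} (ρ ε : Matrix (Fin d) (Fin d) ℂ) (N : ℕ) (l : List ℕ) :
    Matrix (Fin d) (Fin d) ℂ :=
  ((pcoeff 0 l : ℂ))⁻¹ •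
    (prodL ρ ε l *
      ((N.descFactorial (l.sum + l.length) : ℂ) • ρ ^ (N - (l.sum + l.length))))

lemma TT_nil {d : ℕ} (ρ ε : Matrix (Fin d) (Fin d) ℂ) (N : ℕ) : TT ρ ε N [] = ρ ^ N := by
  simp [TT, pcoeff, prodL]

lemma TT_zero {d : ℕ} (ρ ε : Matrix (Fin d) (Fin d) ℂ) (N : ℕ) (l : List ℕ)
    (h : N < l.sum + l.length) : TT ρ ε N l = 0 := by
  simp [TT, Nat.descFactorial_eq_zero_iff_lt.mpr h]

/-- normal form of a snoc term -/
lemma TT_snoc {d : ℕ} (ρ ε : Matrix (Fin d) (Fin d) ℂ) (M : ℕ) (l : List ℕ) (j : ℕ) :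
    TT ρ ε M (l ++ [j]) =
      (((pcoeff 0 l : ℂ))⁻¹ * ((l.sum + l.length + j + 1 : ℕ) : ℂ)⁻¹ *
          ((Nat.factorial j : ℂ))⁻¹ *
          ((M.descFactorial (l.sum + l.length + j + 1) : ℕ) : ℂ)) •
        (prodL ρ ε l * ((adM ρ)^[j] ε * ρ ^ (M - (l.sum + l.length + j + 1)))) := by
  have hw : (l ++ [j]).sum + (l ++ [j]).length = l.sum + l.length + j + 1 := by
    simp; omega
  rw [TT, hw, prodL_append, pcoeff_append]
  rw [show (0 : ℕ) + l.sum + l.length + j + 1 = l.sum + l.length + j + 1 by omega]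
  push_cast
  rw [mul_inv]
  simp only [smul_mul_assoc, mul_smul_comm, smul_smul, mul_assoc]
  ring_nf


/-- the ε-contribution term -/
noncomputable def EE {d : ℕ} (ρ ε : Matrix (Fin d) (Fin d) ℂ) (N : ℕ) (l : List ℕ) (j : ℕ) :
    Matrix (Fin d) (Fin d) ℂ :=
  (((pcoeff 0 l : ℂ))⁻¹ * ((N.descFactorial (l.sum + l.length) : ℕ) : ℂ) *
      (((N - (l.sum + l.length)).choose j : ℕ) : ℂ)) •
    (prodL ρ ε l * ((adM ρ)^[j] ε * ρ ^ (N - (l.sum + l.length) - j)))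

lemma L6 {d : ℕ} (ρ ε : Matrix (Fin d) (Fin d) ℂ) (N : ℕ) (l : List ℕ) (j : ℕ) :
    TT ρ ε (N + 1) (l ++ [j]) = TT ρ ε N (l ++ [j]) * ρ + EE ρ ε N l j := by
  have key : ∀ (c W F Dw D' C : ℂ), c ≠ 0 → W ≠ 0 → F ≠ 0 →
      c⁻¹ * W⁻¹ * F⁻¹ * (Dw + W * D' * F * C) = c⁻¹ * W⁻¹ * F⁻¹ * Dw + c⁻¹ * D' * C := by
    intros c W F Dw D' C hc hW hF; field_simp
  have mid0 : ∀ (A B : Matrix (Fin d) (Fin d) ℂ) (e : ℕ),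
      (A * (B * ρ ^ e)) * ρ = A * (B * ρ ^ (e + 1)) := by
    intro A B e; rw [mul_assoc A, mul_assoc B, ← pow_succ]
  set w' := l.sum + l.length with hw'
  have hd : ((N+1).descFactorial (w' + j + 1) : ℂ)
      = (N.descFactorial (w' + j + 1) : ℂ)
        + ((w' + j + 1 : ℕ) : ℂ) * (N.descFactorial w' : ℂ) * (Nat.factorial j : ℂ) *
            ((N - w').choose j : ℂ) := by
    have h1 : (N+1).descFactorial (w' + j + 1)
        = N.descFactorial (w' + j + 1) + (w' + j + 1) * N.descFactorial (w' + j) :=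
      desc_key N (w' + j)
    have h2 : N.descFactorial (w' + j) = N.descFactorial w' * (N - w').descFactorial j :=
      descFactorial_add' N w' j
    have h3 : (N - w').descFactorial j = Nat.factorial j * (N - w').choose j :=
      Nat.descFactorial_eq_factorial_mul_choose _ _
    rw [h1, h2, h3]; push_cast; ring
  have hcne : ((pcoeff 0 l : ℕ) : ℂ) ≠ 0 := Nat.cast_ne_zero.mpr (pcoeff_pos l 0).ne'
  have hwne : ((w' + j + 1 : ℕ) : ℂ) ≠ 0 := Nat.cast_ne_zero.mpr (by omega)
  have hfne : ((Nat.factorial j : ℕ) : ℂ) ≠ 0 := Nat.cast_ne_zero.mpr (Nat.factorial_ne_zero j)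
  rcases le_or_gt (w' + j + 1) N with hle | hgt
  · have e1 : N + 1 - (w' + j + 1) = N - w' - j := by omega
    have e2 : N - (w' + j + 1) + 1 = N - w' - j := by omega
    have mid : TT ρ ε N (l ++ [j]) * ρ =
        (((pcoeff 0 l : ℂ))⁻¹ * ((w' + j + 1 : ℕ) : ℂ)⁻¹ * ((Nat.factorial j : ℂ))⁻¹ *
            ((N.descFactorial (w' + j + 1) : ℕ) : ℂ)) •
          (prodL ρ ε l * ((adM ρ)^[j] ε * ρ ^ (N - w' - j))) := by
      rw [TT_snoc, smul_mul_assoc, mid0, e2]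
    rw [TT_snoc, mid, EE, ← hw', e1, ← add_smul]
    congr 1
    rw [hd]
    linear_combination key ((pcoeff 0 l : ℕ) : ℂ) ((w' + j + 1 : ℕ) : ℂ)
      ((Nat.factorial j : ℕ) : ℂ) ((N.descFactorial (w' + j + 1) : ℕ) : ℂ)
      ((N.descFactorial w' : ℕ) : ℂ) (((N - w').choose j : ℕ) : ℂ) hcne hwne hfne
  · have hmid0 : ((N.descFactorial (w' + j + 1) : ℕ) : ℂ) = 0 := by
      rw [Nat.descFactorial_eq_zero_iff_lt.mpr hgt]; simp
    have mid : TT ρ ε N (l ++ [j]) * ρ = 0 := by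
      rw [TT_snoc, ← hw', hmid0]
      simp
    have e1 : N + 1 - (w' + j + 1) = N - w' - j := by omega
    rw [TT_snoc, mid, zero_add, EE, ← hw', e1]
    congr 1
    rw [hd, hmid0, zero_add]
    linear_combination key ((pcoeff 0 l : ℕ) : ℂ) ((w' + j + 1 : ℕ) : ℂ)
      ((Nat.factorial j : ℕ) : ℂ) 0
      ((N.descFactorial w' : ℕ) : ℂ) (((N - w').choose j : ℕ) : ℂ) hcne hwne hfne

lemma L5 {d : ℕ} (ρ ε : Matrix (Fin d) (Fin d) ℂ) (N : ℕ) (l : List ℕ) (B : ℕ)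
    (hB : N + 1 ≤ B) :
    TT ρ ε N l * ε = ∑ j ∈ Finset.range B, EE ρ ε N l j := by
  set w' := l.sum + l.length with hw'
  set a := N - w' with ha
  have step1 : TT ρ ε N l * ε =
      ((pcoeff 0 l : ℂ))⁻¹ • ((N.descFactorial w' : ℂ) • (prodL ρ ε l * (ρ ^ a * ε))) := by
    rw [TT, smul_mul_assoc, mul_smul_comm, smul_mul_assoc, mul_assoc, ← hw', ← ha]
  rw [step1, pow_mul_eps, Finset.mul_sum, Finset.smul_sum, Finset.smul_sum]
  have term_eq : ∀ j ∈ Finset.range (a + 1),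
      ((pcoeff 0 l : ℂ))⁻¹ • ((N.descFactorial w' : ℂ) •
        (prodL ρ ε l * ((a.choose j : ℂ) • ((adM ρ)^[j] ε * ρ ^ (a - j)))))
      = EE ρ ε N l j := by
    intro j _
    rw [EE, ← hw', ← ha, mul_smul_comm, smul_smul, smul_smul]
  rw [Finset.sum_congr rfl term_eq]
  apply Finset.sum_subset
  · intro x hx
    rw [Finset.mem_range] at hx ⊢
    omega
  · intro j _ hj
    rw [Finset.mem_range, not_lt] at hj
    have : (N - w').choose j = 0 := Nat.choose_eq_zero_of_lt (by omega)
    rw [EE, ← hw', ← ha, this]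
    simp

lemma prefix_prod : ∀ (n : ℕ) (ks : Fin n → ℕ) (s : ℕ),
    (∏ i : Fin n,
      (s + (∑ j ∈ Finset.univ.filter (fun j => j ≤ i), ks j) + (i : ℕ) + 1))
      = pcoeff s (List.ofFn ks) := by
  intro n
  induction n with
  | zero => intro ks s; simp [pcoeff]
  | succ n ih =>
    intro ks s
    rw [List.ofFn_succ]
    show _ = (s + ks 0 + 1) * pcoeff (s + ks 0 + 1) (List.ofFn fun i => ks i.succ)
    rw [Fin.prod_univ_succ]
    have h0 : (∑ j ∈ Finset.univ.filter (fun j => j ≤ (0 : Fin (n+1))), ks j) = ks 0 := by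
      have : Finset.univ.filter (fun j => j ≤ (0 : Fin (n+1))) = {0} := by
        ext j
        simp [Fin.le_zero_iff]
      rw [this, Finset.sum_singleton]
    have hsucc : ∀ i : Fin n,
        (∑ j ∈ Finset.univ.filter (fun j => j ≤ i.succ), ks j)
          = ks 0 + ∑ j ∈ Finset.univ.filter (fun j => j ≤ i), ks j.succ := by
      intro i
      rw [Finset.sum_filter, Finset.sum_filter, Fin.sum_univ_succ]
      simp [Fin.succ_le_succ_iff, Fin.zero_le]
    have hfac : ∀ i : Fin n,
        (s + (∑ j ∈ Finset.univ.filter (fun j => j ≤ i.succ), ks j) + ((i.succ : Fin (n+1)) : ℕ) + 1)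
          = ((s + ks 0 + 1) + (∑ j ∈ Finset.univ.filter (fun j => j ≤ i), ks j.succ) + (i : ℕ) + 1) := by
      intro i
      rw [hsucc, Fin.val_succ]
      omega
    rw [Finset.prod_congr rfl (fun i _ => hfac i), h0]
    have := ih (fun t => ks t.succ) (s + ks 0 + 1)
    simp only [Fin.val_zero] at this ⊢
    rw [← this]

noncomputable def SS {d : ℕ} (ρ ε : Matrix (Fin d) (Fin d) ℂ) (N B n : ℕ) :
    Matrix (Fin d) (Fin d) ℂ :=
  ∑ k : Fin n → Fin B, TT ρ ε N (List.ofFn fun i => (k i : ℕ))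

lemma SS_zero {d : ℕ} (ρ ε : Matrix (Fin d) (Fin d) ℂ) (N B : ℕ) :
    SS ρ ε N B 0 = ρ ^ N := by
  rw [SS]
  rw [Fintype.sum_eq_single (default : Fin 0 → Fin B) (fun k hk => absurd (Subsingleton.elim k default) hk)]
  simp [TT_nil]

lemma sum_ofFn_ge {n : ℕ} (k : Fin n → ℕ) (i : Fin n) :
    k i ≤ (List.ofFn k).sum := by
  rw [List.sum_ofFn]
  exact Finset.single_le_sum (fun j _ => Nat.zero_le _) (Finset.mem_univ i)

lemma SS_ext {d : ℕ} (ρ ε : Matrix (Fin d) (Fin d) ℂ) (N B C n : ℕ)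
    (hB : N + 1 ≤ B) (hBC : B ≤ C) : SS ρ ε N C n = SS ρ ε N B n := by
  classical
  have hinj : Function.Injective (fun (k : Fin n → Fin B) (i : Fin n) => Fin.castLE hBC (k i)) := by
    intro k k' h
    funext i
    exact Fin.castLE_injective hBC (congrFun h i)
  let emb : (Fin n → Fin B) ↪ (Fin n → Fin C) := ⟨fun k i => Fin.castLE hBC (k i), hinj⟩
  set f : (Fin n → Fin C) → Matrix (Fin d) (Fin d) ℂ :=
    fun k => TT ρ ε N (List.ofFn fun i => (k i : ℕ)) with hf
  have step1 : SS ρ ε N C n = ∑ k ∈ Finset.univ.map emb, f k := by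
    rw [SS]
    symm
    apply Finset.sum_subset (Finset.subset_univ _)
    intro k _ hk
    by_cases hall : ∀ i, (k i : ℕ) < B
    · refine absurd (Finset.mem_map.mpr ⟨fun i => ⟨(k i : ℕ), hall i⟩, Finset.mem_univ _, ?_⟩) hk
      funext i
      exact Fin.ext rfl
    · push_neg at hall
      obtain ⟨i, hi⟩ := hall
      apply TT_zero
      have := sum_ofFn_ge (fun i => (k i : ℕ)) i
      simp only [List.length_ofFn] at *
      omega
  rw [step1, Finset.sum_map, SS]
  apply Finset.sum_congr rfl
  intro k _
  show TT ρ ε N (List.ofFn fun i => ((emb k) i : ℕ)) = _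
  simp only [emb, Function.Embedding.coeFn_mk, Fin.coe_castLE]

lemma SS_snoc {d : ℕ} (ρ ε : Matrix (Fin d) (Fin d) ℂ) (N B n : ℕ) :
    SS ρ ε N B (n + 1)
      = ∑ k : Fin n → Fin B, ∑ j ∈ Finset.range B,
          TT ρ ε N ((List.ofFn fun i => (k i : ℕ)) ++ [j]) := by
  classical
  have hofn : ∀ (k : Fin n → Fin B) (j : Fin B),
      (List.ofFn fun i => ((Fin.snoc k j : Fin (n+1) → Fin B) i : ℕ))
        = (List.ofFn fun i => (k i : ℕ)) ++ [(j : ℕ)] := by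
    intro k j
    have h1 : (fun i => ((Fin.snoc k j : Fin (n+1) → Fin B) i : ℕ))
        = Fin.snoc (fun i => (k i : ℕ)) ((j : ℕ)) := by
      funext i
      refine Fin.lastCases ?_ ?_ i
      · simp
      · intro i'
        simp
    rw [h1, List.ofFn_succ']
    simp [List.concat_eq_append]
  rw [SS, ← Fintype.sum_equiv (Fin.snocEquiv (fun _ => Fin B))
    (fun p : Fin B × (Fin n → Fin B) =>
      TT ρ ε N ((List.ofFn fun i => (p.2 i : ℕ)) ++ [(p.1 : ℕ)]))
    (fun k : Fin (n+1) → Fin B => TT ρ ε N (List.ofFn fun i => (k i : ℕ)))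
    (by
      intro p
      show TT ρ ε N ((List.ofFn fun i => (p.2 i : ℕ)) ++ [(p.1 : ℕ)])
          = TT ρ ε N (List.ofFn fun i => ((Fin.snoc p.2 p.1 : Fin (n+1) → Fin B) i : ℕ))
      rw [hofn p.2 p.1])]
  rw [Fintype.sum_prod_type]
  rw [Finset.sum_comm]
  apply Finset.sum_congr rfl
  intro k _
  rw [← Fin.sum_univ_eq_sum_range (fun j => TT ρ ε N ((List.ofFn fun i => (k i : ℕ)) ++ [j])) B]

lemma SS_len_zero {d : ℕ} (ρ ε : Matrix (Fin d) (Fin d) ℂ) (N B n : ℕ) (h : N < n) :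
    SS ρ ε N B n = 0 := by
  rw [SS]
  apply Finset.sum_eq_zero
  intro k _
  apply TT_zero
  simp only [List.length_ofFn]
  omega

theorem main_formula {d : ℕ} (ρ ε : Matrix (Fin d) (Fin d) ℂ) (N : ℕ) :
    (ρ + ε) ^ N = ∑ n ∈ Finset.range (N + 1), SS ρ ε N (N + 1) n := by
  induction N with
  | zero => rw [Finset.sum_range_one, SS_zero, pow_zero, pow_zero]
  | succ N ih =>
    show _ = ∑ n ∈ Finset.range (N + 2), SS ρ ε (N + 1) (N + 2) n
    have key1 : ∀ n, SS ρ ε (N+1) (N+2) (n+1)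
        = SS ρ ε N (N+2) (n+1) * ρ + SS ρ ε N (N+2) n * ε := by
      intro n
      rw [SS_snoc]
      have inner : ∀ k : Fin n → Fin (N+2),
          ∑ j ∈ Finset.range (N+2), TT ρ ε (N+1) ((List.ofFn fun i => (k i : ℕ)) ++ [j])
            = (∑ j ∈ Finset.range (N+2), TT ρ ε N ((List.ofFn fun i => (k i : ℕ)) ++ [j]) * ρ)
              + TT ρ ε N (List.ofFn fun i => (k i : ℕ)) * ε := by
        intro k
        rw [Finset.sum_congr rfl (fun j _ => L6 ρ ε N _ j), Finset.sum_add_distrib,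
          L5 ρ ε N _ (N+2) (by omega)]
      rw [Finset.sum_congr rfl (fun k _ => inner k), Finset.sum_add_distrib]
      congr 1
      · rw [SS_snoc, Finset.sum_mul]
        exact Finset.sum_congr rfl fun k _ => (Finset.sum_mul _ _ _).symm
      · rw [SS, Finset.sum_mul]
    have key0 : SS ρ ε (N+1) (N+2) 0 = SS ρ ε N (N+2) 0 * ρ := by
      rw [SS_zero, SS_zero, pow_succ]
    rw [Finset.sum_range_succ' (fun n => SS ρ ε (N+1) (N+2) n) (N+1)]
    rw [Finset.sum_congr rfl (fun n _ => key1 n), key0, Finset.sum_add_distrib]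
    -- now : (∑ SS N (n+1) ρ) + (∑ SS N n ε) + SS N 0 * ρ
    have regroup : (∑ n ∈ Finset.range (N+1), SS ρ ε N (N+2) (n+1) * ρ)
        + SS ρ ε N (N+2) 0 * ρ
        = (∑ n ∈ Finset.range (N+1), SS ρ ε N (N+2) n) * ρ := by
      rw [← Finset.sum_mul, ← add_mul,
        ← Finset.sum_range_succ' (fun n => SS ρ ε N (N+2) n) (N+1)]
      rw [Finset.sum_range_succ, SS_len_zero ρ ε N (N+2) (N+1) (by omega), add_zero]
    have : ∑ n ∈ Finset.range (N + 1), SS ρ ε N (N + 2) (n + 1) * ρ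
          + ∑ n ∈ Finset.range (N + 1), SS ρ ε N (N + 2) n * ε
          + SS ρ ε N (N + 2) 0 * ρ
        = (∑ n ∈ Finset.range (N+1), SS ρ ε N (N+2) n) * ρ
          + (∑ n ∈ Finset.range (N+1), SS ρ ε N (N+2) n) * ε := by
      rw [← regroup, ← Finset.sum_mul, ← Finset.sum_mul]
      ring_nf
      abel
    rw [this, ← mul_add]
    have hext : ∀ n, SS ρ ε N (N+2) n = SS ρ ε N (N+1) n :=
      fun n => SS_ext ρ ε N (N+1) (N+2) n le_rfl (by omega)
    rw [Finset.sum_congr rfl (fun n _ => hext n), ← ih, pow_succ]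


/-- Paycha's noncommutative Taylor formula for the monomial  f(z) = z^N. -/
theorem paycha_formula_monomial {d : ℕ} (ρ ε : Matrix (Fin d) (Fin d) ℂ) (N : ℕ) :
    (ρ + ε) ^ N =
      ∑ n ∈ Finset.range (N + 1),
        ∑ k : Fin n → Fin (N + 1),
          if (∑ i, (k i : ℕ)) + n ≤ N then
            ((∏ i : Fin n,
                (((∑ j ∈ Finset.univ.filter (fun j => j ≤ i), (k j : ℕ)) + (i : ℕ) + 1 : ℕ) :
                  ℂ))⁻¹) •
              ((List.ofFn fun i : Fin n =>
                  ((Nat.factorial (k i) : ℂ))⁻¹ • (adM ρ)^[(k i : ℕ)] ε).prod *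
                ((((Nat.factorial N / Nat.factorial (N - ((∑ i, (k i : ℕ)) + n)) : ℕ)) : ℂ) •
                  ρ ^ (N - ((∑ i, (k i : ℕ)) + n))))
          else 0 := by
  rw [main_formula]
  apply Finset.sum_congr rfl
  intro n _
  rw [SS]
  apply Finset.sum_congr rfl
  intro k _
  have h1 : (List.ofFn fun i => (k i : ℕ)).sum + (List.ofFn fun i => (k i : ℕ)).length
      = (∑ i, (k i : ℕ)) + n := by
    simp [List.sum_ofFn]
  by_cases hc : (∑ i, (k i : ℕ)) + n ≤ N
  · rw [if_pos hc, TT, h1]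
    congr 1
    · congr 1
      rw [← Nat.cast_prod]
      congr 1
      have := prefix_prod n (fun i => (k i : ℕ)) 0
      simp only [zero_add] at this
      exact this.symm
    · congr 1
      · rw [prodL, List.map_ofFn]
        rfl
      · congr 1
        rw [Nat.descFactorial_eq_div hc]
  · rw [if_neg hc, TT_zero]
    omega
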